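/- If a winning condition Win is i-extendable and the game (A, Win) is determined, then the winning region of Player 1-i is a trap for Player i. -/
import Mathlib


variable {V : Type*}

/-- An infinite play through the arena with edge relation `E`. -/
def IsPlay (E : V → V → Prop) (ρ : ℕ → V) : Prop := ∀ j, E (ρ j) (ρ (j + 1))

/-- Prepending a finite word `u` of vertices to an infinite play `ρ`. -/
def prepend (u : List V) (ρ : ℕ → V) : ℕ → V := fun n =>
  if h : n < u.length then u.get ⟨n, h⟩ else ρ (n - u.length)

/-- A strategy (a map from play prefixes, given as nonempty histories ending in
the current vertex, to next vertices) is legal if it always moves along edges. -/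
def IsStrategy (E : V → V → Prop) (σ : List V → V) : Prop :=
  ∀ (l : List V) (v : V), E v (σ (l.concat v))

/-- Consistency of the play `ρ` with the strategy `σ` of the player whose
vertices are `P`. -/
def ConsistentWith (P : Set V) (σ : List V → V) (ρ : ℕ → V) : Prop :=
  ∀ j, ρ j ∈ P → ρ (j + 1) = σ ((List.range (j + 1)).map ρ)

/-- The winning region of the player whose vertices are `P` and whose set of
winning plays is `S`: the vertices from which this player has a winning
strategy. -/
def WinRegion (E : V → V → Prop) (P : Set V) (S : Set (ℕ → V)) : Set V :=
  {v | ∃ σ, IsStrategy E σ ∧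
    ∀ ρ, IsPlay E ρ → ρ 0 = v → ConsistentWith P σ ρ → ρ ∈ S}

/-- `Y` is a trap for the player whose vertices are `Vi`. -/
def IsTrap (Vi : Set V) (E : V → V → Prop) (Y : Set V) : Prop :=
  ∀ v ∈ Y, (v ∈ Vi → ∀ v', E v v' → v' ∈ Y) ∧
    (v ∉ Vi → ∃ v', E v v' ∧ v' ∈ Y)

/-- Histories built by iterating a choice function. -/
def buildHist (c : List V → V) (v : V) : ℕ → List V
  | 0 => [v]
  | n+1 => (buildHist c v n).concat (c (buildHist c v n))

noncomputable def buildPlay (c : List V → V) (v : V) (n : ℕ) : V :=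
  (buildHist c v n).getLastD v

lemma map_range_succ (ρ : ℕ → V) (n : ℕ) :
    (List.range (n+1)).map ρ = ((List.range n).map ρ).concat (ρ n) := by
  simp [List.range_succ, List.concat_eq_append]

lemma tail_map_range (ρ : ℕ → V) (n : ℕ) :
    ((List.range (n+1)).map ρ).tail = (List.range n).map (fun k => ρ (k+1)) := by
  rw [List.range_succ_eq_map]
  simp [List.map_map, Function.comp]

lemma buildHist_eq (c : List V → V) (v : V) (n : ℕ) :
    buildHist c v n = (List.range (n+1)).map (buildPlay c v) := by
  induction n with
  | zero => simp [buildHist, buildPlay, List.range_succ]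
  | succ n ih =>
    rw [map_range_succ, ← ih]
    show (buildHist c v n).concat (c (buildHist c v n))
        = (buildHist c v n).concat (buildPlay c v (n+1))
    congr 1
    show c (buildHist c v n) = ((buildHist c v n).concat (c (buildHist c v n))).getLastD v
    rw [List.concat_eq_append, List.getLastD_concat]

lemma buildPlay_zero (c : List V → V) (v : V) : buildPlay c v 0 = v := rfl

lemma buildPlay_succ (c : List V → V) (v : V) (n : ℕ) :
    buildPlay c v (n+1) = c ((List.range (n+1)).map (buildPlay c v)) := by
  rw [buildPlay]
  show ((buildHist c v n).concat (c (buildHist c v n))).getLastD v = _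
  rw [List.concat_eq_append, List.getLastD_concat, buildHist_eq]

lemma map_prepend_single (v : V) (ρ : ℕ → V) (m : ℕ) :
    (List.range (m+1)).map (prepend [v] ρ) = v :: (List.range m).map ρ := by
  have h0 : prepend [v] ρ 0 = v := by simp [prepend]
  rw [List.range_succ_eq_map, List.map_cons, List.map_map, h0]
  congr 1

lemma getLastD_map_range_succ (ρ : ℕ → V) (n : ℕ) (d : V) :
    ((List.range (n+1)).map ρ).getLastD d = ρ n := by
  rw [map_range_succ, List.concat_eq_append, List.getLastD_concat]

/-- if the winning condition of Player `i` (whose vertices are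
`Vi` and whose set of winning plays is `Win`) is `i`-extendable and the game is
determined, then the winning region of Player `1-i` (the opponent, whose
vertices are `Viᶜ` and winning plays `Winᶜ`) is a trap for Player `i`. -/
theorem winRegion_opponent_isTrap (E : V → V → Prop) (Vi : Set V)
    (Win : Set (ℕ → V))
    (hTotal : ∀ v, ∃ v', E v v')
    (hext : ∀ ρ ∈ Win, ∀ u : List V, prepend u ρ ∈ Win)
    (hdet : ∀ v, v ∈ WinRegion E Vi Win ∨ v ∈ WinRegion E Viᶜ Winᶜ) :
    IsTrap Vi E (WinRegion E Viᶜ Winᶜ) := by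
  classical
  intro v hv
  obtain ⟨σ, hσ, hσwin⟩ := hv
  constructor
  · -- v ∈ Vi : every successor stays in the region
    intro hvVi v' hE
    by_contra hv'
    obtain ⟨τ, hτ, hτwin⟩ := (hdet v').resolve_right hv'
    -- build the play
    set c : List V → V := fun l =>
      if l.length ≤ 1 then v'
      else if l.getLastD v ∈ Vi then τ l.tail else σ l with hc
    set ρ : ℕ → V := buildPlay c v with hρ
    have h0 : ρ 0 = v := rfl
    have h1 : ρ 1 = v' := by
      rw [hρ, buildPlay_succ]
      simp [hc]
    have hstep : ∀ n, ρ (n+2) =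
        if ρ (n+1) ∈ Vi then τ ((List.range (n+1)).map (fun k => ρ (k+1)))
        else σ ((List.range (n+2)).map ρ) := by
      intro n
      rw [hρ, buildPlay_succ]
      rw [hc]
      simp only [List.length_map, List.length_range]
      rw [if_neg (by omega)]
      rw [getLastD_map_range_succ, tail_map_range]
    have hplay : IsPlay E ρ := by
      intro j
      cases j with
      | zero => rw [h0, h1]; exact hE
      | succ n =>
        rw [hstep n]
        split
        · have := hτ ((List.range n).map (fun k => ρ (k+1))) (ρ (n+1))
          rwa [← map_range_succ (fun k => ρ (k+1)) n] at this
        · have := hσ ((List.range (n+1)).map ρ) (ρ (n+1))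
          rwa [← map_range_succ ρ (n+1)] at this
    have hconsσ : ConsistentWith Viᶜ σ ρ := by
      intro j hj
      cases j with
      | zero => exact absurd hvVi hj
      | succ n => exact (hstep n).trans (if_neg hj)
    have hρnotWin : ρ ∈ (Winᶜ : Set (ℕ → V)) := hσwin ρ hplay h0 hconsσ
    have hρ'Win : (fun n => ρ (n+1)) ∈ Win := by
      refine hτwin _ (fun j => hplay (j+1)) h1 ?_
      intro j hj
      show ρ (j+2) = _
      exact (hstep j).trans (if_pos (hj : ρ (j+1) ∈ Vi))
    have := hext _ hρ'Win [v]
    have heq : prepend [v] (fun n => ρ (n+1)) = ρ := by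
      funext n
      cases n with
      | zero => simp [prepend, h0]
      | succ m => simp [prepend]
    rw [heq] at this
    exact hρnotWin this
  · -- v ∉ Vi : the strategy σ picks a successor in the region
    intro hvVi
    refine ⟨σ [v], ?_, ?_⟩
    · have := hσ [] v
      simpa using this
    · refine ⟨fun l => σ (v :: l), ?_, ?_⟩
      · intro l w
        have := hσ (v :: l) w
        simpa using this
      · intro ρ' hplay' h0' hcons'
        by_contra hWin
        have hWin' : ρ' ∈ Win := not_not.mp hWin
        have hkey : prepend [v] ρ' ∈ Winᶜ := by
          refine hσwin _ ?_ ?_ ?_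
          · intro j
            cases j with
            | zero =>
              show E v (ρ' 0)
              rw [h0']
              simpa using hσ [] v
            | succ n =>
              show E (ρ' n) (ρ' (n+1))
              exact hplay' n
          · rfl
          · intro j hj
            cases j with
            | zero =>
              show ρ' 0 = σ ((List.range 1).map (prepend [v] ρ'))
              rw [map_prepend_single, h0']
              simp
            | succ n =>
              show ρ' (n+1) = σ ((List.range (n+2)).map (prepend [v] ρ'))
              have hmem : ρ' n ∈ (Viᶜ : Set V) := hj
              rw [map_prepend_single]
              exact hcons' n hmem
        exact hkey (hext _ hWin' [v])
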